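/- For every integer n ≥ 3, the graph B_{2n} obtained from K_{n,n} by deleting a perfect matching satisfies ζ_{B_{2n}}(u)^{-1} = (1 − u²)^{n(n−3)} · ((1 + (n−2)u²)² − u²)^{n−1} · ((1 + (n−2)u²)² − (1−n)²u²) in ℤ[u]. -/

import Mathlib

open Polynomial Matrix

/-- The reciprocal of the Ihara zeta function of a finite simple graph `G`, as a polynomial
in `ℤ[u]`: `(1 - u²)^(r-1) * det(I - A·u + Q·u²)`, where `A` is the adjacency matrix,
`Q = D - I` with `D` the degree matrix, and `r - 1 = |E| - |V|`. -/
noncomputable def iharaZetaInv {V : Type} [Fintype V] [DecidableEq V]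
    (G : SimpleGraph V) [DecidableRel G.Adj] : Polynomial ℤ :=
  (1 - X ^ 2) ^ (G.edgeFinset.card - Fintype.card V) *
    ((1 : Matrix V V (Polynomial ℤ)) - (X : Polynomial ℤ) • G.adjMatrix (Polynomial ℤ) +
      (X ^ 2 : Polynomial ℤ) • Matrix.diagonal (fun v => (G.degree v : Polynomial ℤ) - 1)).det

/-- The graph `B_{2n}`: the complete bipartite graph `K_{n,n}` with a perfect matching removed.
Vertices are pairs `(i, a)` with `i : Fin n`, `a : Fin 2` (the part is the second coordinate),
and `(i, a)` is adjacent to `(j, b)` exactly when `i ≠ j` and `a ≠ b`. -/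
def matchingDeletedBipartiteGraph (n : ℕ) : SimpleGraph (Fin n × Fin 2) where
  Adj x y := x.1 ≠ y.1 ∧ x.2 ≠ y.2
  symm := ⟨fun _ _ h => ⟨h.1.symm, h.2.symm⟩⟩
  loopless := ⟨fun _ h => h.1 rfl⟩

instance (n : ℕ) : DecidableRel (matchingDeletedBipartiteGraph n).Adj :=
  fun x y => inferInstanceAs (Decidable (x.1 ≠ y.1 ∧ x.2 ≠ y.2))

open Kronecker Finset

namespace IharaAux

variable (m : ℕ)

noncomputable section

/-- the "last" index -/
abbrev L : Fin (m + 3) := Fin.last (m + 2)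

/-- all-ones matrix -/
def U : Matrix (Fin (m + 3)) (Fin (m + 3)) ℤ[X] := of fun _ _ => 1
/-- matrix whose last column is ones -/
def CL : Matrix (Fin (m + 3)) (Fin (m + 3)) ℤ[X] := of fun _ j => if j = L m then 1 else 0
/-- matrix whose last row is ones -/
def RL : Matrix (Fin (m + 3)) (Fin (m + 3)) ℤ[X] := of fun i _ => if i = L m then 1 else 0
/-- matrix unit at (last,last) -/
def EL : Matrix (Fin (m + 3)) (Fin (m + 3)) ℤ[X] := Matrix.single (L m) (L m) 1

def Km : Matrix (Fin (m + 3)) (Fin (m + 3)) ℤ[X] := U m - 1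
def Pm : Matrix (Fin (m + 3)) (Fin (m + 3)) ℤ[X] := 1 + CL m - EL m
def Tm : Matrix (Fin (m + 3)) (Fin (m + 3)) ℤ[X] :=
  -1 + RL m + (((m : ℤ[X]) + 2)) • EL m

lemma Km_apply (i j : Fin (m + 3)) : Km m i j = if i = j then 0 else 1 := by
  simp only [Km, U, Matrix.sub_apply, one_apply, of_apply]
  split <;> simp

lemma U_mul_CL : U m * CL m = ((m : ℤ[X]) + 3) • CL m := by
  refine Matrix.ext fun i k => ?_
  by_cases hk : k = L m <;>
    simp [U, CL, mul_apply, hk, Finset.sum_const, Finset.card_univ] <;> push_cast <;> ring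

lemma U_mul_EL : U m * EL m = CL m := by
  refine Matrix.ext fun i k => ?_
  simp only [U, EL, CL, Matrix.single, mul_apply, of_apply, one_mul, ite_and,
    Finset.sum_ite_eq, Finset.mem_univ, if_true]
  simp [eq_comm]

lemma CL_mul_RL : CL m * RL m = U m := by
  refine Matrix.ext fun i k => ?_
  simp [CL, RL, U, mul_apply, ite_mul, Finset.sum_ite_eq']

lemma CL_mul_EL : CL m * EL m = CL m := by
  refine Matrix.ext fun i k => ?_
  simp only [CL, EL, Matrix.single, mul_apply, of_apply, ite_and, ite_mul, one_mul, zero_mul]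
  simp [Finset.sum_ite_eq', eq_comm]

lemma EL_mul_RL : EL m * RL m = RL m := by
  refine Matrix.ext fun i k => ?_
  simp only [RL, EL, Matrix.single, mul_apply, of_apply, ite_and, ite_mul, one_mul, zero_mul]
  simp [Finset.sum_ite_eq', eq_comm]

lemma EL_mul_EL : EL m * EL m = EL m := by
  rw [EL, Matrix.single_mul_single_same, one_mul]

lemma key1 : Km m * Pm m = Pm m * Tm m := by
  simp only [Km, Pm, Tm, mul_add, add_mul, mul_sub, sub_mul, mul_one, one_mul,
    mul_smul_comm, smul_mul_assoc, mul_neg, neg_mul, mul_neg_one, neg_one_mul,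
    U_mul_CL, U_mul_EL, CL_mul_RL, CL_mul_EL, EL_mul_RL, EL_mul_EL]
  module

lemma Pm_blockTriangular : (Pm m).BlockTriangular id := by
  intro i j h
  have hij : i ≠ j := by rintro rfl; exact lt_irrefl _ h
  have hjL : j ≠ L m := by
    rintro rfl
    exact absurd (Fin.le_last i) (not_le.2 h)
  simp [Pm, CL, EL, Matrix.single, one_apply, hij, Ne.symm hij, hjL, Ne.symm hjL]

lemma det_Pm : (Pm m).det = 1 := by
  rw [det_of_upperTriangular (Pm_blockTriangular m)]
  have : ∀ i, Pm m i i = 1 := by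
    intro i
    rcases eq_or_ne i (L m) with hi | hi
    · simp [Pm, CL, EL, Matrix.single, one_apply, hi]
    · simp [Pm, CL, EL, Matrix.single, one_apply, hi, Ne.symm hi]
  simp [this]

end

end IharaAux

namespace IharaAux

noncomputable section
variable (m : ℕ)

def K2 : Matrix (Fin 2) (Fin 2) ℤ[X] := of fun a b => if a = b then 0 else 1
def P2 : Matrix (Fin 2) (Fin 2) ℤ[X] := !![1, 1; 0, 1]
def T2 : Matrix (Fin 2) (Fin 2) ℤ[X] := !![-1, 0; 1, 1]

lemma key2 : K2 * P2 = P2 * T2 := by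
  refine Matrix.ext fun a b => ?_
  fin_cases a <;> fin_cases b <;>
    simp [K2, P2, T2, mul_apply, Fin.sum_univ_two, Fin.ext_iff]

lemma det_P2 : K2.det = K2.det := rfl

lemma det_P2' : P2.det = 1 := by
  rw [P2, det_fin_two_of]; ring

/-- the diagonal polynomial `1 + (n-2) u²` -/
def dP : ℤ[X] := 1 + ((m : ℤ[X]) + 1) * X ^ 2

def Qm : Matrix (Fin (m + 3) × Fin 2) (Fin (m + 3) × Fin 2) ℤ[X] := Pm m ⊗ₖ P2
def Am : Matrix (Fin (m + 3) × Fin 2) (Fin (m + 3) × Fin 2) ℤ[X] := Km m ⊗ₖ K2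
def Mm : Matrix (Fin (m + 3) × Fin 2) (Fin (m + 3) × Fin 2) ℤ[X] :=
  dP m • 1 - (X : ℤ[X]) • Am m
def Dm : Matrix (Fin (m + 3) × Fin 2) (Fin (m + 3) × Fin 2) ℤ[X] :=
  dP m • 1 - (X : ℤ[X]) • (Tm m ⊗ₖ T2)

lemma AQ : Am m * Qm m = Qm m * (Tm m ⊗ₖ T2) := by
  rw [Am, Qm, ← mul_kronecker_mul, key1, key2, mul_kronecker_mul]

lemma MQ : Mm m * Qm m = Qm m * Dm m := by
  rw [Mm, Dm, sub_mul, mul_sub, smul_mul_assoc, one_mul, mul_smul_comm, mul_one,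
    smul_mul_assoc, mul_smul_comm, AQ]

lemma det_Qm : (Qm m).det = 1 := by
  rw [Qm, det_kronecker, det_Pm, det_P2']; simp

lemma det_Mm_eq : (Mm m).det = (Dm m).det := by
  have h := congrArg det (MQ m)
  rwa [det_mul, det_mul, det_Qm, mul_one, one_mul] at h

lemma Tm_diag (i : Fin (m + 3)) : Tm m i i = if i = L m then (m : ℤ[X]) + 2 else -1 := by
  rcases eq_or_ne i (L m) with hi | hi
  · simp [Tm, RL, EL, Matrix.single, hi]
  · simp [Tm, RL, EL, Matrix.single, hi, Ne.symm hi]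

lemma Dm_diag (v : Fin (m + 3) × Fin 2) :
    Dm m v v = dP m - X * (Tm m v.1 v.1 * T2 v.2 v.2) := by
  simp [Dm, one_apply, kroneckerMap_apply]

lemma Dm_zero {v w : Fin (m + 3) × Fin 2}
    (h : v.1 < w.1 ∨ (v.1 = w.1 ∧ v.2 < w.2)) : Dm m v w = 0 := by
  have hvw : v ≠ w := by
    rcases h with h | ⟨h1, h2⟩
    · exact fun e => absurd (congrArg Prod.fst e) h.ne
    · exact fun e => absurd (congrArg Prod.snd e) h2.ne
  have hT : Tm m v.1 w.1 * T2 v.2 w.2 = 0 := by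
    rcases h with h | ⟨h1, h2⟩
    · have h1 : v.1 ≠ w.1 := h.ne
      have hL : v.1 ≠ L m := by
        rintro hL
        exact absurd (hL ▸ Fin.le_last w.1) (not_le.2 h)
      have : Tm m v.1 w.1 = 0 := by
        simp [Tm, RL, EL, Matrix.single, one_apply, h1, hL, Ne.symm hL]
      rw [this, zero_mul]
    · have hv2 : v.2 = 0 := by omega
      have hw2 : w.2 = 1 := by omega
      have : T2 v.2 w.2 = 0 := by rw [hv2, hw2]; simp [T2]
      rw [this, mul_zero]
  simp [Dm, one_apply_ne hvw, kroneckerMap_apply, hT]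

lemma det_Dm :
    (Dm m).det = ((dP m - X) * (dP m + X)) ^ (m + 2) *
      ((dP m + ((m : ℤ[X]) + 2) * X) * (dP m - ((m : ℤ[X]) + 2) * X)) := by
  have hval : ∀ p : Fin ((m + 3) * 2),
      (p : ℕ) = ((finProdFinEquiv.symm p).2 : ℕ) + 2 * ((finProdFinEquiv.symm p).1 : ℕ) := by
    intro p
    have h := Equiv.apply_symm_apply (finProdFinEquiv (m := m + 3) (n := 2)) p
    have h2 := congrArg Fin.val h
    simpa using h2.symm
  have htri : ((Dm m).submatrix (finProdFinEquiv.symm) (finProdFinEquiv.symm)).BlockTriangular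
      OrderDual.toDual := by
    intro p q hpq
    have hpq' : (p : ℕ) < (q : ℕ) := hpq
    rw [submatrix_apply]
    set v := finProdFinEquiv.symm p with hv
    set w := finProdFinEquiv.symm q with hw
    have hp := hval p
    have hq := hval q
    rw [← hv] at hp
    rw [← hw] at hq
    have hb1 : (v.2 : ℕ) < 2 := v.2.isLt
    have hb2 : (w.2 : ℕ) < 2 := w.2.isLt
    refine Dm_zero m ?_
    rcases lt_or_ge (v.1 : ℕ) (w.1 : ℕ) with h | h
    · exact Or.inl h
    · right
      have h1 : (v.1 : ℕ) = (w.1 : ℕ) := by omega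
      exact ⟨Fin.ext h1, by omega⟩
  rw [← det_submatrix_equiv_self (finProdFinEquiv (m := m + 3) (n := 2)).symm (Dm m),
    det_of_lowerTriangular _ htri]
  simp only [submatrix_apply]
  rw [Equiv.prod_comp (finProdFinEquiv (m := m + 3) (n := 2)).symm (fun v => Dm m v v)]
  set g : Fin (m + 3) → ℤ[X] :=
    fun i => (dP m - X * (Tm m i i * T2 0 0)) * (dP m - X * (Tm m i i * T2 1 1)) with hg
  have hsplit : ∏ v : Fin (m + 3) × Fin 2, Dm m v v = ∏ i : Fin (m + 3), g i := by
    rw [Fintype.prod_prod_type]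
    refine Finset.prod_congr rfl fun i _ => ?_
    rw [Fin.prod_univ_two, Dm_diag, Dm_diag]
  rw [hsplit, ← Finset.prod_erase_mul Finset.univ g (Finset.mem_univ (L m))]
  have e0 : T2 0 0 = -1 := by simp [T2]
  have e1 : T2 1 1 = 1 := by simp [T2]
  have hL : g (L m) = (dP m + ((m : ℤ[X]) + 2) * X) * (dP m - ((m : ℤ[X]) + 2) * X) := by
    rw [hg]
    simp only []
    rw [Tm_diag, if_pos rfl, e0, e1]
    ring
  have hne : ∀ i ∈ Finset.univ.erase (L m), g i = (dP m - X) * (dP m + X) := by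
    intro i hi
    have h1 : i ≠ L m := (Finset.mem_erase.1 hi).1
    rw [hg]
    simp only []
    rw [Tm_diag, if_neg h1, e0, e1]
    ring
  rw [Finset.prod_congr rfl hne, Finset.prod_const, hL,
    Finset.card_erase_of_mem (Finset.mem_univ _), Finset.card_univ, Fintype.card_fin]
  norm_num

end

end IharaAux

open IharaAux

set_option maxHeartbeats 1000000

/-- For `n ≥ 3`, the Ihara zeta function of `B_{2n}`, i.e. `K_{n,n}` minus a perfect
matching. -/
theorem iharaZetaInv_matchingDeletedBipartiteGraph (n : ℕ) (hn : 3 ≤ n) :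
    iharaZetaInv (matchingDeletedBipartiteGraph n) =
      (1 - X ^ 2) ^ (n * (n - 3)) *
        ((1 + C ((n : ℤ) - 2) * X ^ 2) ^ 2 - X ^ 2) ^ (n - 1) *
        ((1 + C ((n : ℤ) - 2) * X ^ 2) ^ 2 - C ((1 - (n : ℤ)) ^ 2) * X ^ 2) := by
  obtain ⟨m, rfl⟩ : ∃ m, n = m + 3 := ⟨n - 3, by omega⟩
  clear hn
  have hdeg : ∀ v, (matchingDeletedBipartiteGraph (m + 3)).degree v = m + 2 := by
    intro v
    rw [← SimpleGraph.card_neighborFinset_eq_degree]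
    have hNF : (matchingDeletedBipartiteGraph (m + 3)).neighborFinset v =
        ({v.1}ᶜ ×ˢ {v.2}ᶜ : Finset (Fin (m + 3) × Fin 2)) := by
      ext w
      rw [SimpleGraph.mem_neighborFinset]
      simp [SimpleGraph.mem_neighborFinset, matchingDeletedBipartiteGraph,
        Finset.mem_product, ne_comm]
    rw [hNF, Finset.card_product, Finset.card_compl, Finset.card_compl]
    simp
  have hedge : (matchingDeletedBipartiteGraph (m + 3)).edgeFinset.card
      = (m + 3) * (m + 2) := by
    have hsum := SimpleGraph.sum_degrees_eq_twice_card_edges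
      (matchingDeletedBipartiteGraph (m + 3))
    simp only [hdeg, Finset.sum_const, Finset.card_univ, Fintype.card_prod,
      Fintype.card_fin, smul_eq_mul] at hsum
    have h2 : 2 * ((m + 3) * (m + 2)) =
        2 * (matchingDeletedBipartiteGraph (m + 3)).edgeFinset.card := by
      rw [← hsum]; ring
    exact (Nat.eq_of_mul_eq_mul_left (by norm_num) h2).symm
  have hMat : ((1 : Matrix (Fin (m + 3) × Fin 2) (Fin (m + 3) × Fin 2) ℤ[X]) -
        (X : ℤ[X]) • (matchingDeletedBipartiteGraph (m + 3)).adjMatrix ℤ[X] +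
        (X ^ 2 : ℤ[X]) • Matrix.diagonal
          (fun v => ((matchingDeletedBipartiteGraph (m + 3)).degree v : ℤ[X]) - 1)) = Mm m := by
    refine Matrix.ext fun v w => ?_
    have hadj : (matchingDeletedBipartiteGraph (m + 3)).adjMatrix ℤ[X] v w
        = Km m v.1 w.1 * K2 v.2 w.2 := by
      rw [SimpleGraph.adjMatrix_apply, Km_apply]
      show (if (v.1 ≠ w.1 ∧ v.2 ≠ w.2) then (1 : ℤ[X]) else 0) = _
      by_cases h1 : v.1 = w.1 <;> by_cases h2 : v.2 = w.2 <;> simp [h1, h2, K2]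
    simp only [Mm, Am, Matrix.add_apply, Matrix.sub_apply, Matrix.smul_apply, kroneckerMap_apply,
      smul_eq_mul, hadj, diagonal_apply]
    by_cases hvw : v = w
    · subst hvw
      rw [if_pos rfl, hdeg, one_apply_eq, Km_apply, if_pos rfl, dP]
      push_cast
      ring
    · rw [if_neg hvw, one_apply_ne hvw]
      ring
  unfold iharaZetaInv
  rw [hedge, hMat, det_Mm_eq, det_Dm]
  have hexp : (m + 3) * (m + 2) - Fintype.card (Fin (m + 3) × Fin 2) = (m + 3) * m := by
    have hc : Fintype.card (Fin (m + 3) × Fin 2) = (m + 3) * 2 := by simp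
    have h : (m + 3) * (m + 2) = (m + 3) * m + (m + 3) * 2 := by ring
    rw [hc, h, Nat.add_sub_cancel]
  rw [hexp]
  have h3 : (m + 3) - 3 = m := by omega
  have h1 : (m + 3) - 1 = m + 2 := by omega
  rw [h3, h1, dP]
  have e1 : (((m + 3 : ℕ) : ℤ) - 2) = (m : ℤ) + 1 := by push_cast; ring
  have e2 : ((1 - ((m + 3 : ℕ) : ℤ)) ^ 2) = ((m : ℤ) + 2) ^ 2 := by push_cast; ring
  have hC1 : (C (((m + 3 : ℕ) : ℤ) - 2) : ℤ[X]) = (m : ℤ[X]) + 1 := by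
    rw [e1, map_add, map_natCast, _root_.map_one]
  have hC2 : (C ((1 - ((m + 3 : ℕ) : ℤ)) ^ 2) : ℤ[X]) = ((m : ℤ[X]) + 2) ^ 2 := by
    rw [e2, map_pow, map_add, map_natCast, map_ofNat]
  rw [hC1, hC2]
  ring
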